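/- Let $\Gamma > 0$, $\Delta \in \mathbb{R}$, $\eta_0 > 0$, $\mathcal{L} = [1+(2\Delta/\Gamma)^2]^{-1}$, $t_g = -\frac{\eta_0}{\Gamma}\mathcal{L}^2[1 - (2\Delta/\Gamma)^2]$, and $t_W = \frac{2}{\Gamma}\mathcal{L}$. Then $t_W + \frac{\int_0^{\eta_0} e^{-\eta'\mathcal{L}}\, t_g(\eta')\, d\eta'}{\int_0^{\eta_0} e^{-\eta'\mathcal{L}}\, d\eta'} = \frac{1}{\Gamma} - \frac{e^{-\eta_0\mathcal{L}}}{1 - e^{-\eta_0\mathcal{L}}}\, t_g$, where $t_g(\eta') = -\frac{\eta'}{\Gamma}\mathcal{L}^2[1-(2\Delta/\Gamma)^2]$ denotes the group delay at optical depth $\eta'$. -/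

import Mathlib

open intervalIntegral

lemma int_exp (c a : ℝ) (hc : c ≠ 0) :
    (∫ η in (0:ℝ)..a, Real.exp (-η * c)) = (1 - Real.exp (-a * c)) / c := by
  have h : ∀ x ∈ Set.uIcc (0:ℝ) a,
      HasDerivAt (fun η => -Real.exp (-η * c) / c) (Real.exp (-x * c)) x := by
    intro x _
    have h1 : HasDerivAt (fun η : ℝ => -η * c) (-c) x := by
      simpa using ((hasDerivAt_id x).neg.mul_const c)
    have h2 := (Real.hasDerivAt_exp (-x * c)).comp x h1
    have h3 := (h2.neg).div_const c
    refine HasDerivAt.congr_deriv h3 ?_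
    field_simp
  rw [intervalIntegral.integral_eq_sub_of_hasDerivAt h (Continuous.intervalIntegrable (by continuity) _ _)]
  simp only [neg_mul, zero_mul, neg_zero, Real.exp_zero]
  ring

lemma int_x_exp (c a : ℝ) (hc : c ≠ 0) :
    (∫ η in (0:ℝ)..a, η * Real.exp (-η * c))
      = (1 - (1 + a * c) * Real.exp (-a * c)) / c ^ 2 := by
  have h : ∀ x ∈ Set.uIcc (0:ℝ) a,
      HasDerivAt (fun η => -((η * c + 1) * Real.exp (-η * c)) / c ^ 2)
        (x * Real.exp (-x * c)) x := by
    intro x _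
    have h1 : HasDerivAt (fun η : ℝ => -η * c) (-c) x := by
      simpa using ((hasDerivAt_id x).neg.mul_const c)
    have h2 := (Real.hasDerivAt_exp (-x * c)).comp x h1
    have h4 : HasDerivAt (fun η : ℝ => η * c + 1) c x := by
      simpa using ((hasDerivAt_id x).mul_const c).add_const 1
    have h5 := ((h4.mul h2).neg).div_const (c ^ 2)
    refine HasDerivAt.congr_deriv h5 ?_
    simp only [Function.comp_apply]
    field_simp
    ring
  rw [intervalIntegral.integral_eq_sub_of_hasDerivAt h (Continuous.intervalIntegrable (by continuity) _ _)]
  simp only [neg_mul, zero_mul, neg_zero, Real.exp_zero]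
  field_simp
  ring

/-- The scattered-photon time delay (Wigner delay plus the depth-averaged group delay)
equals the scattered-photon atomic excitation time:
`t_W + (∫₀^{η₀} e^{-η'ℒ} t_g(η') dη')/(∫₀^{η₀} e^{-η'ℒ} dη')
  = 1/Γ - e^{-η₀ℒ}/(1-e^{-η₀ℒ}) · t_g(η₀)`. -/
theorem stmt9 (Γ Δ η₀ : ℝ) (hΓ : 0 < Γ) (hη₀ : 0 < η₀) :
    let ℒ : ℝ := (1 + (2 * Δ / Γ)^2)⁻¹
    let tg : ℝ → ℝ := fun η' => -(η' / Γ) * ℒ^2 * (1 - (2 * Δ / Γ)^2)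
    let tW : ℝ := (2 / Γ) * ℒ
    tW + (∫ η' in (0:ℝ)..η₀, Real.exp (-η' * ℒ) * tg η')
          / (∫ η' in (0:ℝ)..η₀, Real.exp (-η' * ℒ))
      = 1 / Γ - (Real.exp (-η₀ * ℒ) / (1 - Real.exp (-η₀ * ℒ))) * tg η₀ := by
  intro ℒ tg tW
  have hden : (0:ℝ) < 1 + (2 * Δ / Γ)^2 := by positivity
  have hL : 0 < ℒ := by simp only [ℒ]; positivity
  have hLne : ℒ ≠ 0 := ne_of_gt hL
  have hE : Real.exp (-η₀ * ℒ) < 1 := by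
    rw [show (1:ℝ) = Real.exp 0 by simp]
    apply Real.exp_lt_exp.mpr
    nlinarith
  have hEne : 1 - Real.exp (-η₀ * ℒ) ≠ 0 := by linarith
  have hI1 : (∫ η' in (0:ℝ)..η₀, Real.exp (-η' * ℒ) * tg η')
      = (-(1/Γ) * ℒ^2 * (1 - (2 * Δ / Γ)^2)) *
        ((1 - (1 + η₀ * ℒ) * Real.exp (-η₀ * ℒ)) / ℒ ^ 2) := by
    rw [← int_x_exp ℒ η₀ hLne, ← intervalIntegral.integral_const_mul]
    congr 1
    funext η'
    simp only [tg]
    ring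
  rw [hI1, int_exp ℒ η₀ hLne]
  simp only [tg, tW]
  have key : (1 - (2 * Δ / Γ)^2) = (2 * ℒ - 1) / ℒ := by
    have h1 : ℒ * (1 + (2 * Δ / Γ)^2) = 1 := inv_mul_cancel₀ (ne_of_gt hden)
    have h2 : ℒ * (Γ^2 + (2*Δ)^2) = Γ^2 := by
      field_simp at h1; nlinarith [h1]
    field_simp
    nlinarith [h2]
  rw [key]
  set E := Real.exp (-η₀ * ℒ) with hEdef
  field_simp
  ring
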